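/- Let X and Z be positive semidefinite matrices with Z positive definite, and suppose X • Z_t ≤ c for some constant c. Then ‖X‖ ≤ c / λ_min(Z_t), where λ_min denotes the smallest eigenvalue. More generally: if X_t, Z_t are feasible for the perturbed dual and primal SDPs with Z_t positive definite, and X, Z are optimal solutions, then X • Z_t + X_t • Z = X_t • Z_t, and consequently the optimal solution sets of the perturbed dual and primal SDPs are uniformly bounded for all sufficiently small t, provided the primal SDP is strictly feasible and the perturbed dual has strictly feasible points X_t → X₀. -/

import Mathlib

open Matrix Set Filter Topology

noncomputable section

abbrev Mat (n : ℕ) := Matrix (Fin n) (Fin n) ℝ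

def ip {n : ℕ} (A B : Mat n) : ℝ := ∑ i, ∑ j, A i j * B i j

def frobNorm {n : ℕ} (X : Mat n) : ℝ := Real.sqrt (∑ i, ∑ j, (X i j) ^ 2)

namespace SDPAux
variable {n : ℕ}
variable {n : ℕ}

lemma ip_comm (A B : Mat n) : ip A B = ip B A := by
  simp [ip, mul_comm]

/-- `ip A -` as a linear map. -/
def ipL (A : Mat n) : Mat n →ₗ[ℝ] ℝ where
  toFun B := ip A B
  map_add' B C := by simp [ip, Matrix.add_apply, mul_add, Finset.sum_add_distrib]
  map_smul' c B := by simp [ip, Matrix.smul_apply, Finset.mul_sum, mul_left_comm, smul_eq_mul]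

lemma ip_add_right (A B C : Mat n) : ip A (B + C) = ip A B + ip A C := (ipL A).map_add B C
lemma ip_smul_right (A : Mat n) (c : ℝ) (B : Mat n) : ip A (c • B) = c * ip A B := (ipL A).map_smul c B
lemma ip_sub_right (A B C : Mat n) : ip A (B - C) = ip A B - ip A C := (ipL A).map_sub B C
lemma ip_zero_right (A : Mat n) : ip A 0 = 0 := (ipL A).map_zero
lemma ip_sum_smul_right {m : ℕ} (M : Mat n) (y : Fin m → ℝ) (B : Fin m → Mat n) :
    ip M (∑ k, y k • B k) = ∑ k, y k * ip M (B k) := by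
  rw [show ip M (∑ k, y k • B k) = ipL M (∑ k, y k • B k) from rfl, map_sum]
  simp [ipL, ip_smul_right]; rfl

lemma ip_eq_trace (A B : Mat n) : ip A B = Matrix.trace (Aᵀ * B) := by
  simp [ip, Matrix.trace, Matrix.diag, Matrix.mul_apply, Matrix.transpose_apply]
  rw [Finset.sum_comm]

lemma ip_quadform (M : Mat n) (v : Fin n → ℝ) :
    ip M (vecMulVec v v) = v ⬝ᵥ (M *ᵥ v) := by
  simp [ip, vecMulVec, dotProduct, Matrix.mulVec, Finset.mul_sum, mul_comm, mul_left_comm]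

lemma posSemidef_vecMulVec (v : Fin n → ℝ) : (vecMulVec v v).PosSemidef := by
  refine Matrix.PosSemidef.of_dotProduct_mulVec_nonneg ?_ ?_
  · ext i j; simp [vecMulVec, Matrix.conjTranspose_apply, mul_comm]
  · intro x
    have : (vecMulVec v v) *ᵥ x = (v ⬝ᵥ x) • v := by
      ext i
      simp only [vecMulVec, Matrix.mulVec, dotProduct, Matrix.of_apply, Pi.smul_apply,
        smul_eq_mul, Finset.sum_mul]
      exact Finset.sum_congr rfl fun j _ => by ring
    rw [this]
    simp only [star_trivial, dotProduct_smul]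
    have : v ⬝ᵥ x = x ⬝ᵥ v := by simp [dotProduct, mul_comm]
    rw [smul_eq_mul, this]
    exact mul_self_nonneg _

lemma herm_of_symm {M : Mat n} (h : M.IsSymm) : M.IsHermitian := by
  rwa [Matrix.IsHermitian, Matrix.conjTranspose_eq_transpose_of_trivial]

lemma psd_smul {M : Mat n} {c : ℝ} (hc : 0 ≤ c) (hM : M.PosSemidef) : (c • M).PosSemidef := by
  refine Matrix.PosSemidef.of_dotProduct_mulVec_nonneg ?_ ?_
  · have h1 := hM.1
    rw [Matrix.IsHermitian] at h1 ⊢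
    rw [Matrix.conjTranspose_smul, h1, star_trivial]
  · intro x
    rw [Matrix.smul_mulVec, dotProduct_smul, smul_eq_mul]
    exact mul_nonneg hc (hM.dotProduct_mulVec_nonneg x)

lemma dotProduct_self_pos {v : Fin n → ℝ} (hv : v ≠ 0) : 0 < v ⬝ᵥ v := by
  have h := dotProduct_self_star_pos_iff.mpr hv
  rwa [star_trivial] at h

lemma dotProduct_self_nonneg' (v : Fin n → ℝ) : 0 ≤ v ⬝ᵥ v :=
  Finset.sum_nonneg fun i _ => mul_self_nonneg _
open scoped MatrixOrder in
lemma ip_nonneg {X Z : Mat n} (hX : X.PosSemidef) (hZ : Z.PosSemidef) : 0 ≤ ip X Z := by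
  have hXh : Xᵀ = X := by
    rw [← Matrix.conjTranspose_eq_transpose_of_trivial]; exact hX.1
  set S := CFC.sqrt Z with hSdef
  have hS : S.PosSemidef := (CFC.sqrt_nonneg Z).posSemidef
  have hSS : S * S = Z := CFC.sqrt_mul_sqrt_self Z hZ.nonneg
  have hSsymm : ∀ i j, S i j = S j i := by
    intro i j; conv_lhs => rw [← hS.1]
    simp [Matrix.conjTranspose_apply]
  rw [ip_eq_trace, hXh, ← hSS, ← Matrix.mul_assoc, Matrix.trace_mul_comm, ← Matrix.mul_assoc]
  rw [Matrix.trace]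
  apply Finset.sum_nonneg; intro i _
  have h := hX.dotProduct_mulVec_nonneg (fun j => S i j)
  rw [star_trivial] at h
  have expand : Matrix.diag (S * X * S) i = ∑ k, ∑ j, S i j * X j k * S k i := by
    simp [Matrix.diag, Matrix.mul_apply, Finset.sum_mul]
  rw [expand]
  have expand2 : (fun j => S i j) ⬝ᵥ (X *ᵥ fun j => S i j) = ∑ j, ∑ k, S i j * X j k * S k i := by
    simp only [dotProduct, Matrix.mulVec, Finset.mul_sum]
    exact Finset.sum_congr rfl fun j _ => Finset.sum_congr rfl fun k _ => by
      rw [hSsymm k i]; ring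
  rw [Finset.sum_comm, ← expand2]
  exact h

lemma trace_conj {U V M : Mat n} (hVU : V * U = 1) : Matrix.trace (U * M * V) = Matrix.trace M := by
  rw [Matrix.trace_mul_cycle, hVU, Matrix.one_mul]

lemma trace_sq_conj {W M : Mat n} (h1 : star W * W = 1) :
    Matrix.trace ((W * M * star W) * (W * M * star W)) = Matrix.trace (M * M) := by
  rw [Matrix.mul_assoc (W*M) (star W) _, ← Matrix.mul_assoc (star W) (W*M) (star W),
    ← Matrix.mul_assoc (star W) W M, h1, Matrix.one_mul]
  rw [show (W*M)*(M*star W) = W*(M*M)*star W by simp [Matrix.mul_assoc]]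
  exact trace_conj h1

lemma psd_unitary_conj {W D : Mat n} (hD : D.PosSemidef) : (W * D * star W).PosSemidef := by
  have := hD.mul_mul_conjTranspose_same W
  rwa [← Matrix.star_eq_conjTranspose] at this

section herm
variable {A : Mat n} (hA : A.IsHermitian)

lemma spectral_real :
    A = (Matrix.IsHermitian.eigenvectorUnitary hA : Mat n) * Matrix.diagonal hA.eigenvalues *
      star (Matrix.IsHermitian.eigenvectorUnitary hA : Mat n) := by
  have := hA.spectral_theorem
  rwa [RCLike.ofReal_real_eq_id, Function.id_comp] at this

lemma trace_eq_sum_eigen : Matrix.trace A = ∑ i, hA.eigenvalues i := by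
  conv_lhs => rw [spectral_real hA]
  rw [trace_conj (by
    have := (Matrix.mem_unitaryGroup_iff').mp (Matrix.IsHermitian.eigenvectorUnitary hA).2
    exact this)]
  simp [Matrix.trace_diagonal]

lemma ip_self_eq_sum_sq : ip A A = ∑ i, hA.eigenvalues i ^ 2 := by
  have hAh : Aᵀ = A := by
    rw [← Matrix.conjTranspose_eq_transpose_of_trivial]; exact hA
  rw [ip_eq_trace, hAh]
  have hUU : star (Matrix.IsHermitian.eigenvectorUnitary hA : Mat n) *
      (Matrix.IsHermitian.eigenvectorUnitary hA : Mat n) = 1 :=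
    (Matrix.mem_unitaryGroup_iff').mp (Matrix.IsHermitian.eigenvectorUnitary hA).2
  conv_lhs => rw [spectral_real hA]
  rw [trace_sq_conj hUU, Matrix.diagonal_mul_diagonal, Matrix.trace_diagonal]
  exact Finset.sum_congr rfl fun i _ => (sq _).symm

lemma psd_sub_smul_one {c : ℝ} (h : ∀ i, c ≤ hA.eigenvalues i) : (A - c • 1).PosSemidef := by
  have hUU' : (Matrix.IsHermitian.eigenvectorUnitary hA : Mat n) *
      star (Matrix.IsHermitian.eigenvectorUnitary hA : Mat n) = 1 :=
    (Matrix.mem_unitaryGroup_iff).mp (Matrix.IsHermitian.eigenvectorUnitary hA).2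
  have h2 : Matrix.diagonal (fun i => hA.eigenvalues i - c) =
      Matrix.diagonal hA.eigenvalues - c • (1 : Mat n) := by
    ext i j
    rcases eq_or_ne i j with rfl | hij
    · simp [Matrix.diagonal_apply_eq, Matrix.one_apply_eq]
    · simp [Matrix.diagonal_apply_ne _ hij, Matrix.one_apply_ne hij]
  have key : (Matrix.IsHermitian.eigenvectorUnitary hA : Mat n) *
      Matrix.diagonal (fun i => hA.eigenvalues i - c) *
      star (Matrix.IsHermitian.eigenvectorUnitary hA : Mat n) = A - c • 1 := by
    rw [h2, Matrix.mul_sub, Matrix.sub_mul, ← spectral_real hA, Matrix.mul_smul,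
      Matrix.smul_mul, Matrix.mul_one, hUU']
  rw [← key]
  exact psd_unitary_conj (Matrix.PosSemidef.diagonal (fun i => sub_nonneg.mpr (h i)))

lemma quad_ge_of_eigen {c : ℝ} (h : ∀ i, c ≤ hA.eigenvalues i) (v : Fin n → ℝ) :
    c * (v ⬝ᵥ v) ≤ v ⬝ᵥ (A *ᵥ v) := by
  have h1 := (psd_sub_smul_one hA h).dotProduct_mulVec_nonneg v
  rw [star_trivial, Matrix.sub_mulVec, dotProduct_sub, Matrix.smul_mulVec,
    Matrix.one_mulVec, dotProduct_smul, smul_eq_mul] at h1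
  linarith

lemma eigen_ge_of_quad {c : ℝ} (h : ∀ v : Fin n → ℝ, c * (v ⬝ᵥ v) ≤ v ⬝ᵥ (A *ᵥ v)) (i : Fin n) :
    c ≤ hA.eigenvalues i := by
  have he := hA.eigenvalues_eq i
  set v : Fin n → ℝ := ⇑(hA.eigenvectorBasis i) with hv
  have hnorm : v ⬝ᵥ v = 1 := by
    have h1 : ‖hA.eigenvectorBasis i‖ = 1 := hA.eigenvectorBasis.orthonormal.1 i
    have h2 : ‖hA.eigenvectorBasis i‖ ^ 2 = 1 := by rw [h1]; norm_num
    rw [EuclideanSpace.norm_eq] at h2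
    rw [Real.sq_sqrt (by positivity)] at h2
    simpa [dotProduct, sq] using h2
  have := h v
  rw [hnorm, mul_one] at this
  rw [he]
  simpa [star_trivial] using this
end herm
lemma frobNorm_nonneg (X : Mat n) : 0 ≤ frobNorm X := Real.sqrt_nonneg _

lemma frobNorm_eq_sqrt_ip (X : Mat n) : frobNorm X = Real.sqrt (ip X X) := by
  unfold frobNorm ip
  congr 1
  exact Finset.sum_congr rfl fun i _ => Finset.sum_congr rfl fun j _ => (sq _)

lemma ip_smul_one (X : Mat n) (c : ℝ) : ip X (c • (1 : Mat n)) = c * Matrix.trace X := by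
  simp [ip, Matrix.smul_apply, Matrix.one_apply, Matrix.trace, Matrix.diag, mul_ite,
    Finset.mul_sum, mul_comm]

/-- smallest eigenvalue -/
def lam {M : Mat n} (hM : M.IsHermitian) : ℝ := ⨅ i, hM.eigenvalues i

lemma lam_le {M : Mat n} (hM : M.IsHermitian) (i : Fin n) :
    lam hM ≤ hM.eigenvalues i :=
  ciInf_le (Set.Finite.bddBelow (Set.finite_range _)) i

lemma exists_lam_eq (hn : 0 < n) {M : Mat n} (hM : M.IsHermitian) :
    ∃ i, lam hM = hM.eigenvalues i := by
  have : Nonempty (Fin n) := ⟨⟨0, hn⟩⟩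
  obtain ⟨i, hi⟩ := Finite.exists_min hM.eigenvalues
  exact ⟨i, le_antisymm (lam_le hM i) (le_ciInf hi)⟩

lemma nonneg_of_forall_le_smul {K q : ℝ} (h : ∀ r > 0, K ≤ r * q) : 0 ≤ q := by
  by_contra hq
  push_neg at hq
  have hr : (0:ℝ) < max 1 ((K-1)/q) := lt_of_lt_of_le one_pos (le_max_left _ _)
  have h2 := h _ hr
  have h3 : max 1 ((K-1)/q) * q ≤ (K-1)/q * q :=
    mul_le_mul_of_nonpos_right (le_max_right _ _) hq.le
  rw [div_mul_cancel₀ _ (ne_of_lt hq)] at h3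
  linarith

lemma frobNorm_le_trace {X : Mat n} (hX : X.PosSemidef) : frobNorm X ≤ Matrix.trace X := by
  rw [frobNorm_eq_sqrt_ip, ip_self_eq_sum_sq hX.1, trace_eq_sum_eigen hX.1]
  have h1 : Real.sqrt (∑ i, hX.1.eigenvalues i ^ 2) ≤
      Real.sqrt ((∑ i, hX.1.eigenvalues i) ^ 2) :=
    Real.sqrt_le_sqrt (Finset.sum_sq_le_sq_sum_of_nonneg (fun i _ => hX.eigenvalues_nonneg i))
  rwa [Real.sqrt_sq (Finset.sum_nonneg fun i _ => hX.eigenvalues_nonneg i)] at h1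

/-- Part (i): the eigenvalue bound. -/
lemma part_i (hn : 0 < n) (X Z : Mat n) (c : ℝ) (hX : X.PosSemidef) (hZ : Z.PosDef)
    (h : ip X Z ≤ c) : frobNorm X ≤ c / ⨅ i, hZ.1.eigenvalues i := by
  have hlam : (⨅ i, hZ.1.eigenvalues i) = lam hZ.1 := rfl
  obtain ⟨i0, hi0⟩ := exists_lam_eq hn hZ.1
  have hpos : 0 < lam hZ.1 := hi0 ▸ hZ.eigenvalues_pos i0
  have htr : lam hZ.1 * Matrix.trace X ≤ ip X Z := by
    have h0 : 0 ≤ ip X (Z - lam hZ.1 • 1) :=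
      ip_nonneg hX (psd_sub_smul_one hZ.1 (fun i => lam_le hZ.1 i))
    rw [ip_sub_right, ip_smul_one] at h0
    linarith
  have hfr := frobNorm_le_trace hX
  rw [hlam, le_div_iff₀ hpos]
  calc frobNorm X * lam hZ.1 ≤ Matrix.trace X * lam hZ.1 :=
        mul_le_mul_of_nonneg_right hfr hpos.le
    _ = lam hZ.1 * Matrix.trace X := mul_comm _ _
    _ ≤ ip X Z := htr
    _ ≤ c := h

/-! ### entrywise 1-norm -/

def nrm1 (E : Mat n) : ℝ := ∑ i, ∑ j, |E i j|

lemma nrm1_nonneg (E : Mat n) : 0 ≤ nrm1 E :=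
  Finset.sum_nonneg fun _ _ => Finset.sum_nonneg fun _ _ => abs_nonneg _

lemma abs_entry_le_nrm1 (E : Mat n) (i j : Fin n) : |E i j| ≤ nrm1 E := by
  have h1 : |E i j| ≤ ∑ j', |E i j'| :=
    Finset.single_le_sum (fun j' _ => abs_nonneg (E i j')) (Finset.mem_univ j)
  exact h1.trans (Finset.single_le_sum
    (fun i' (_ : i' ∈ Finset.univ) => Finset.sum_nonneg fun j' _ => abs_nonneg (E i' j'))
    (Finset.mem_univ i))

lemma abs_quad_le (E : Mat n) (v : Fin n → ℝ) :
    |v ⬝ᵥ (E *ᵥ v)| ≤ nrm1 E * (v ⬝ᵥ v) := by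
  have hS : ∀ i j : Fin n, |v i * v j| ≤ v ⬝ᵥ v := by
    intro i j
    have h1 : v i ^ 2 ≤ v ⬝ᵥ v := by
      simpa [dotProduct, sq] using
        Finset.single_le_sum (f := fun k => v k * v k)
          (fun k _ => mul_self_nonneg _) (Finset.mem_univ i)
    have h2 : v j ^ 2 ≤ v ⬝ᵥ v := by
      simpa [dotProduct, sq] using
        Finset.single_le_sum (f := fun k => v k * v k)
          (fun k _ => mul_self_nonneg _) (Finset.mem_univ j)
    have h3 : 2 * |v i| * |v j| ≤ |v i| ^ 2 + |v j| ^ 2 := two_mul_le_add_sq _ _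
    rw [abs_mul]
    rw [sq_abs, sq_abs] at h3
    nlinarith [abs_nonneg (v i), abs_nonneg (v j)]
  have expand : v ⬝ᵥ (E *ᵥ v) = ∑ i, ∑ j, v i * E i j * v j := by
    simp [dotProduct, Matrix.mulVec, Finset.mul_sum, mul_assoc]
  rw [expand, nrm1, Finset.sum_mul]
  calc |∑ i, ∑ j, v i * E i j * v j| ≤ ∑ i, |∑ j, v i * E i j * v j| :=
        Finset.abs_sum_le_sum_abs _ _
    _ ≤ ∑ i, ∑ j, |v i * E i j * v j| :=
        Finset.sum_le_sum fun i _ => Finset.abs_sum_le_sum_abs _ _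
    _ ≤ ∑ i, (∑ j, |E i j|) * (v ⬝ᵥ v) := by
        apply Finset.sum_le_sum
        intro i _
        rw [Finset.sum_mul]
        apply Finset.sum_le_sum
        intro j _
        have : |v i * E i j * v j| = |E i j| * |v i * v j| := by
          rw [abs_mul, abs_mul, abs_mul]; ring
        rw [this]
        exact mul_le_mul_of_nonneg_left (hS i j) (abs_nonneg _)

lemma abs_ip_le (C E : Mat n) : |ip C E| ≤ nrm1 C * nrm1 E := by
  rw [ip, nrm1, Finset.sum_mul]
  calc |∑ i, ∑ j, C i j * E i j| ≤ ∑ i, ∑ j, |C i j * E i j| :=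
        (Finset.abs_sum_le_sum_abs _ _).trans
          (Finset.sum_le_sum fun i _ => Finset.abs_sum_le_sum_abs _ _)
    _ ≤ ∑ i, ∑ j, |C i j| * nrm1 E := by
        refine Finset.sum_le_sum fun i _ => Finset.sum_le_sum fun j _ => ?_
        rw [abs_mul]
        exact mul_le_mul_of_nonneg_left (abs_entry_le_nrm1 E i j) (abs_nonneg _)
    _ = ∑ i, (∑ j, |C i j|) * nrm1 E := by
        exact Finset.sum_congr rfl fun i _ => (Finset.sum_mul _ _ _).symm

lemma continuous_entry (i j : Fin n) : Continuous fun X : Mat n => X i j :=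
  (continuous_apply j).comp (continuous_apply i)

lemma continuous_nrm1 : Continuous (nrm1 : Mat n → ℝ) := by
  apply continuous_finset_sum
  intro i _
  apply continuous_finset_sum
  intro j _
  exact (continuous_entry i j).abs

lemma tendsto_ip {α : Type*} {l : Filter α} {F G : α → Mat n} {P Q : Mat n}
    (hF : Tendsto F l (nhds P)) (hG : Tendsto G l (nhds Q)) :
    Tendsto (fun t => ip (F t) (G t)) l (nhds (ip P Q)) := by
  unfold ip
  apply tendsto_finset_sum
  intro i _
  apply tendsto_finset_sum
  intro j _
  exact (((continuous_entry i j).tendsto P).comp hF).mul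
    (((continuous_entry i j).tendsto Q).comp hG)

lemma quad_lower_perturb {M₀ M : Mat n} {α : ℝ}
    (h0 : ∀ v : Fin n → ℝ, α * (v ⬝ᵥ v) ≤ v ⬝ᵥ (M₀ *ᵥ v)) (v : Fin n → ℝ) :
    (α - nrm1 (M - M₀)) * (v ⬝ᵥ v) ≤ v ⬝ᵥ (M *ᵥ v) := by
  have h1 := abs_quad_le (M - M₀) v
  have h2 : v ⬝ᵥ ((M - M₀) *ᵥ v) = v ⬝ᵥ (M *ᵥ v) - v ⬝ᵥ (M₀ *ᵥ v) := by
    rw [Matrix.sub_mulVec, dotProduct_sub]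
  rw [h2] at h1
  have h3 := (abs_le.mp h1).1
  rw [sub_mul]
  have h4 := h0 v
  linarith

lemma posdef_of_quad {M : Mat n} (hM : M.IsHermitian) {α : ℝ} (hα : 0 < α)
    (h : ∀ v : Fin n → ℝ, α * (v ⬝ᵥ v) ≤ v ⬝ᵥ (M *ᵥ v)) : M.PosDef := by
  refine Matrix.PosDef.of_dotProduct_mulVec_pos hM fun v hv => ?_
  rw [star_trivial]
  exact lt_of_lt_of_le (mul_pos hα (dotProduct_self_pos hv)) (h v)

lemma lam_ge_of_quad (hn : 0 < n) {M : Mat n} (hM : M.IsHermitian) {α : ℝ}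
    (h : ∀ v : Fin n → ℝ, α * (v ⬝ᵥ v) ≤ v ⬝ᵥ (M *ᵥ v)) : α ≤ lam hM :=
  haveI : Nonempty (Fin n) := ⟨⟨0, hn⟩⟩
  le_ciInf (eigen_ge_of_quad hM h)

lemma quad_ge_lam {M : Mat n} (hM : M.IsHermitian) (v : Fin n → ℝ) :
    lam hM * (v ⬝ᵥ v) ≤ v ⬝ᵥ (M *ᵥ v) :=
  quad_ge_of_eigen hM (fun i => lam_le hM i) v

/-! ### symmetrization and the constraint map -/

def symPart (E : Mat n) : Mat n := (1/2 : ℝ) • (E + Eᵀ)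

lemma symPart_isSymm (E : Mat n) : (symPart E).IsSymm := by
  unfold symPart Matrix.IsSymm
  rw [Matrix.transpose_smul, Matrix.transpose_add, Matrix.transpose_transpose, add_comm]

lemma nrm1_symPart_le (E : Mat n) : nrm1 (symPart E) ≤ nrm1 E := by
  unfold symPart nrm1
  have h1 : ∀ i j : Fin n, |((1/2 : ℝ) • (E + Eᵀ)) i j| ≤ (|E i j| + |E j i|) / 2 := by
    intro i j
    simp only [Matrix.smul_apply, Matrix.add_apply, Matrix.transpose_apply, smul_eq_mul]
    rw [abs_mul]
    calc |(1:ℝ)/2| * |E i j + E j i| ≤ |(1:ℝ)/2| * (|E i j| + |E j i|) :=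
          mul_le_mul_of_nonneg_left (abs_add_le _ _) (abs_nonneg _)
      _ = (|E i j| + |E j i|) / 2 := by rw [abs_of_pos (by norm_num : (0:ℝ) < 1/2)]; ring
  calc ∑ i, ∑ j, |((1/2 : ℝ) • (E + Eᵀ)) i j| ≤ ∑ i, ∑ j, (|E i j| + |E j i|) / 2 :=
        Finset.sum_le_sum fun i _ => Finset.sum_le_sum fun j _ => h1 i j
    _ = ((∑ i, ∑ j, |E i j|) + (∑ i, ∑ j, |E j i|)) / 2 := by
        rw [← Finset.sum_add_distrib]
        rw [eq_div_iff (by norm_num : (2:ℝ) ≠ 0), Finset.sum_mul]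
        refine Finset.sum_congr rfl fun i _ => ?_
        rw [← Finset.sum_add_distrib, Finset.sum_mul]
        exact Finset.sum_congr rfl fun j _ => by ring
    _ = ∑ i, ∑ j, |E i j| := by rw [Finset.sum_comm (f := fun i j => |E j i|)]; ring

lemma ip_transpose_right {M : Mat n} (hM : M.IsSymm) (E : Mat n) : ip M Eᵀ = ip M E := by
  unfold ip
  rw [Finset.sum_comm]
  refine Finset.sum_congr rfl fun i _ => Finset.sum_congr rfl fun j _ => ?_
  rw [Matrix.transpose_apply]
  exact (Matrix.IsSymm.apply hM j i).symm ▸ rfl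

lemma ip_symPart {M : Mat n} (hM : M.IsSymm) (E : Mat n) : ip M (symPart E) = ip M E := by
  unfold symPart
  rw [ip_smul_right, ip_add_right, ip_transpose_right hM]
  ring

lemma isHermitian_slack {m : ℕ} {A₀ : Mat n} {A : Fin m → Mat n} (hA₀ : A₀.IsSymm)
    (hA : ∀ k, (A k).IsSymm) (y : Fin m → ℝ) : (A₀ - ∑ k, y k • A k).IsHermitian := by
  apply herm_of_symm
  unfold Matrix.IsSymm
  rw [Matrix.transpose_sub, hA₀, Matrix.transpose_sum]
  congr 1
  exact Finset.sum_congr rfl fun k _ => by rw [Matrix.transpose_smul, hA k]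

/-- The linear constraint map `X ↦ (ip (A k) X)_k`. -/
def PhiMap {m : ℕ} (A : Fin m → Mat n) : Mat n →ₗ[ℝ] (Fin m → ℝ) where
  toFun X := fun k => ip (A k) X
  map_add' X Y := by funext k; exact ip_add_right (A k) X Y
  map_smul' c X := by funext k; exact ip_smul_right (A k) c X

@[simp] lemma PhiMap_apply {m : ℕ} (A : Fin m → Mat n) (X : Mat n) (k : Fin m) :
    PhiMap A X k = ip (A k) X := rfl

end SDPAux

def dualFeas {n m : ℕ} (A : Fin m → Mat n) (b : Fin m → ℝ) : Set (Mat n) :=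
  {X | X.PosSemidef ∧ ∀ k, ip (A k) X = b k}

def dualVals {n m : ℕ} (A₀ : Mat n) (A : Fin m → Mat n) (b : Fin m → ℝ) : Set ℝ :=
  {v | ∃ X ∈ dualFeas A b, v = ip A₀ X}

/-- Optimal solution set of the dual SDP. -/
def dualOpt {n m : ℕ} (A₀ : Mat n) (A : Fin m → Mat n) (b : Fin m → ℝ) : Set (Mat n) :=
  {X ∈ dualFeas A b | ip A₀ X = sInf (dualVals A₀ A b)}

def primalVals {n m : ℕ} (A₀ : Mat n) (A : Fin m → Mat n) (b : Fin m → ℝ) : Set ℝ :=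
  {v | ∃ y : Fin m → ℝ, (A₀ - ∑ k, y k • A k).PosSemidef ∧ v = ∑ k, b k * y k}

/-- Optimal slacks of the primal SDP: image of the optimal solution set under
`(y, Z) ↦ Z`. -/
def primalOptSlack {n m : ℕ} (A₀ : Mat n) (A : Fin m → Mat n) (b : Fin m → ℝ) :
    Set (Mat n) :=
  {Z | ∃ y : Fin m → ℝ, (∑ k, y k • A k) + Z = A₀ ∧ Z.PosSemidef ∧
    (∑ k, b k * y k) = sSup (primalVals A₀ A b)}


namespace SDPAux
variable {n m : ℕ}

lemma weak_dual (A₀ : Mat n) (A : Fin m → Mat n) (b : Fin m → ℝ)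
    {X : Mat n} (hX : X ∈ dualFeas A b) {y : Fin m → ℝ}
    (hy : (A₀ - ∑ k, y k • A k).PosSemidef) : ∑ k, b k * y k ≤ ip A₀ X := by
  have h0 : 0 ≤ ip (A₀ - ∑ k, y k • A k) X := ip_nonneg hy hX.1
  rw [ip_comm, ip_sub_right, ip_sum_smul_right] at h0
  have hk : ∀ k, ip X (A k) = b k := fun k => (ip_comm X (A k)).trans (hX.2 k)
  have h1 : ∑ k, y k * ip X (A k) = ∑ k, b k * y k := by
    refine Finset.sum_congr rfl fun k _ => ?_
    rw [hk k, mul_comm]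
  rw [h1] at h0
  have hc := ip_comm X A₀
  linarith

lemma bddBelow_dualVals {A₀ : Mat n} {A : Fin m → Mat n} {b : Fin m → ℝ} {y : Fin m → ℝ}
    (hy : (A₀ - ∑ k, y k • A k).PosSemidef) : BddBelow (dualVals A₀ A b) := by
  refine ⟨∑ k, b k * y k, fun v hv => ?_⟩
  obtain ⟨X, hX, rfl⟩ := hv
  exact weak_dual A₀ A b hX hy

lemma bddAbove_primalVals {A₀ : Mat n} {A : Fin m → Mat n} {b : Fin m → ℝ} {X : Mat n}
    (hX : X ∈ dualFeas A b) : BddAbove (primalVals A₀ A b) := by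
  refine ⟨ip A₀ X, fun v hv => ?_⟩
  obtain ⟨y, hy, rfl⟩ := hv
  exact weak_dual A₀ A b hX hy

set_option maxHeartbeats 1000000 in
/-- Strong duality for the SDP pair under dual strict feasibility (Slater). -/
lemma strong_duality (hn : 0 < n) (A₀ : Mat n) (A : Fin m → Mat n) (b : Fin m → ℝ)
    (hA₀ : A₀.IsSymm) (hA : ∀ k, (A k).IsSymm)
    (Xs : Mat n) (hXsd : Xs.PosDef) (hXsf : ∀ k, ip (A k) Xs = b k)
    (y₀ : Fin m → ℝ) (hy₀ : (A₀ - ∑ k, y₀ k • A k).PosSemidef) :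
    sSup (primalVals A₀ A b) = sInf (dualVals A₀ A b) := by
  have hXsfeas : Xs ∈ dualFeas A b := ⟨hXsd.posSemidef, hXsf⟩
  have dne : (dualVals A₀ A b).Nonempty := ⟨ip A₀ Xs, Xs, hXsfeas, rfl⟩
  have pne : (primalVals A₀ A b).Nonempty := ⟨∑ k, b k * y₀ k, y₀, hy₀, rfl⟩
  have dbb : BddBelow (dualVals A₀ A b) := bddBelow_dualVals hy₀
  have pba : BddAbove (primalVals A₀ A b) := bddAbove_primalVals hXsfeas
  have hle : sSup (primalVals A₀ A b) ≤ sInf (dualVals A₀ A b) := by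
    apply csSup_le pne
    intro v hv
    apply le_csInf dne
    intro w hw
    obtain ⟨y, hy, rfl⟩ := hv
    obtain ⟨X, hX, rfl⟩ := hw
    exact weak_dual A₀ A b hX hy
  refine le_antisymm hle ?_
  set d := sInf (dualVals A₀ A b) with hd
  apply le_of_forall_sub_le
  intro ε hε
  -- the constraint subspace
  set Φ := PhiMap A with hΦdef
  set L := LinearMap.range Φ with hL
  have hbL : b ∈ L := ⟨Xs, funext hXsf⟩
  set bL : L := ⟨b, hbL⟩ with hbLdef
  obtain ⟨σ, hσ⟩ := Φ.rangeRestrict.exists_rightInverse_of_surjective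
    (LinearMap.range_rangeRestrict Φ)
  have hσap : ∀ u : L, Φ (σ u) = (u : Fin m → ℝ) :=
    fun u => congrArg Subtype.val (LinearMap.congr_fun hσ u)
  -- Slater constants
  set α := lam hXsd.1 with hα
  have hαpos : 0 < α := by
    obtain ⟨i0, h⟩ := exists_lam_eq hn hXsd.1
    rw [hα, h]
    exact hXsd.eigenvalues_pos i0
  have hquadXs : ∀ v : Fin n → ℝ, α * (v ⬝ᵥ v) ≤ v ⬝ᵥ (Xs *ᵥ v) := quad_ge_lam hXsd.1
  set γ := min α (1 / (2 * (nrm1 A₀ + 1))) with hγdef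
  have hγpos : 0 < γ := lt_min hαpos (by have := nrm1_nonneg A₀; positivity)
  have hσcont : Continuous σ := σ.continuous_of_finiteDimensional
  obtain ⟨ρ, hρpos, hρ⟩ : ∃ ρ > 0, ∀ u : L, dist u 0 < ρ → nrm1 (σ u) < γ := by
    have h0 : Tendsto (fun u : L => nrm1 (σ u)) (nhds 0) (nhds 0) := by
      have := (continuous_nrm1.comp hσcont).tendsto 0
      simpa [map_zero, nrm1, Function.comp_def] using this
    have h1 := (Metric.tendsto_nhds.mp h0) γ hγpos
    rcases Metric.eventually_nhds_iff.mp h1 with ⟨ρ, hρ, hh⟩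
    refine ⟨ρ, hρ, fun u hu => ?_⟩
    have := hh (show dist u 0 < ρ from hu)
    rw [Real.dist_eq, sub_zero] at this
    exact lt_of_abs_lt this
  -- the convex set
  set T : Set (↥L × ℝ) :=
    {p | ∃ X : Mat n, X.PosSemidef ∧ Φ X = b + (p.1 : Fin m → ℝ) ∧ ip A₀ X < p.2} with hT
  have hTconv : Convex ℝ T := by
    rintro ⟨u1, t1⟩ ⟨X1, hX1, hΦ1, hip1⟩ ⟨u2, t2⟩ ⟨X2, hX2, hΦ2, hip2⟩ a c ha hc hac
    refine ⟨a • X1 + c • X2, (psd_smul ha hX1).add (psd_smul hc hX2), ?_, ?_⟩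
    · rw [map_add, _root_.map_smul, _root_.map_smul, hΦ1, hΦ2]
      simp only [Prod.smul_mk, Prod.mk_add_mk, Submodule.coe_add, SetLike.val_smul]
      have hb : a • b + c • b = b := by rw [← add_smul, hac, one_smul]
      calc a • (b + (u1 : Fin m → ℝ)) + c • (b + (u2 : Fin m → ℝ))
          = (a • b + c • b) + (a • (u1 : Fin m → ℝ) + c • (u2 : Fin m → ℝ)) := by
            rw [smul_add, smul_add]; abel
        _ = b + (a • (u1 : Fin m → ℝ) + c • (u2 : Fin m → ℝ)) := by rw [hb]
    · rw [ip_add_right, ip_smul_right, ip_smul_right]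
      simp only [Prod.smul_mk, Prod.mk_add_mk]
      rcases eq_or_lt_of_le ha with ha' | ha'
      · have hc1 : c = 1 := by linarith
        rw [← ha', hc1]; simpa using hip2
      · exact add_lt_add_of_lt_of_le (mul_lt_mul_of_pos_left hip1 ha')
          (mul_le_mul_of_nonneg_left hip2.le hc)
  -- the point to separate
  set pt : ↥L × ℝ := (0, d - ε) with hptdef
  have hpt : pt ∉ T := by
    rintro ⟨X, hXpsd, hΦX, hip⟩
    have hfeas : X ∈ dualFeas A b := by
      refine ⟨hXpsd, fun k => ?_⟩
      have := congrFun hΦX k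
      simpa [hptdef, hΦdef] using this
    have hdle : d ≤ ip A₀ X := csInf_le dbb ⟨X, hfeas, rfl⟩
    simp only [hptdef] at hip
    linarith
  -- interior point
  set M0 : ℝ := ip A₀ Xs + 1 with hM0
  set r : ℝ := min ρ (1/2) with hr
  have hrpos : 0 < r := lt_min hρpos (by norm_num)
  have hball : Metric.ball ((0 : ↥L), M0) r ⊆ T := by
    rintro ⟨u, t⟩ hmem
    rw [Metric.mem_ball, Prod.dist_eq] at hmem
    have hu : dist u (0 : ↥L) < ρ :=
      lt_of_le_of_lt (le_max_left _ _) (lt_of_lt_of_le hmem (min_le_left _ _))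
    have ht : |t - M0| < 1/2 := by
      have := lt_of_le_of_lt (le_max_right (dist u 0) _) (lt_of_lt_of_le hmem (min_le_right _ _))
      rwa [Real.dist_eq] at this
    have hsmall : nrm1 (σ u) < γ := hρ u hu
    have hsymsmall : nrm1 (symPart (σ u)) < γ := lt_of_le_of_lt (nrm1_symPart_le _) hsmall
    refine ⟨Xs + symPart (σ u), ?_, ?_, ?_⟩
    · -- positive semidefinite
      have hherm : (Xs + symPart (σ u)).IsHermitian := by
        apply herm_of_symm
        unfold Matrix.IsSymm
        rw [Matrix.transpose_add, symPart_isSymm (σ u)]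
        congr 1
        have := hXsd.1
        rwa [Matrix.IsHermitian, Matrix.conjTranspose_eq_transpose_of_trivial] at this
      refine Matrix.PosSemidef.of_dotProduct_mulVec_nonneg hherm fun v => ?_
      rw [star_trivial]
      have hquad := quad_lower_perturb (M := Xs + symPart (σ u)) (M₀ := Xs) hquadXs v
      rw [add_sub_cancel_left] at hquad
      have h1 : 0 ≤ (α - nrm1 (symPart (σ u))) * (v ⬝ᵥ v) := by
        apply mul_nonneg
        · have : γ ≤ α := min_le_left _ _
          linarith
        · exact dotProduct_self_nonneg' v
      linarith
    · -- constraint value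
      rw [map_add]
      have h2 : Φ (symPart (σ u)) = Φ (σ u) := by
        funext k
        rw [PhiMap_apply, PhiMap_apply]
        exact ip_symPart (hA k) (σ u)
      rw [h2, hσap u]
      have h3 : Φ Xs = b := funext hXsf
      rw [h3]
    · -- objective value
      rw [ip_add_right]
      have h4 : |ip A₀ (symPart (σ u))| ≤ nrm1 A₀ * nrm1 (symPart (σ u)) := abs_ip_le _ _
      have h5 : nrm1 A₀ * nrm1 (symPart (σ u)) < nrm1 A₀ * γ + γ := by
        have := mul_le_mul_of_nonneg_left hsymsmall.le (nrm1_nonneg A₀)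
        linarith [hγpos]
      have h6 : nrm1 A₀ * γ + γ = (nrm1 A₀ + 1) * γ := by ring
      have h7 : (nrm1 A₀ + 1) * γ ≤ (nrm1 A₀ + 1) * (1 / (2 * (nrm1 A₀ + 1))) :=
        mul_le_mul_of_nonneg_left (min_le_right _ _) (by have := nrm1_nonneg A₀; positivity)
      have h8 : (nrm1 A₀ + 1) * (1 / (2 * (nrm1 A₀ + 1))) = 1/2 := by
        have h0 : nrm1 A₀ + 1 ≠ 0 := by have := nrm1_nonneg A₀; positivity
        field_simp
      have h9 : ip A₀ (symPart (σ u)) < 1/2 := by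
        have h4' := le_abs_self (ip A₀ (symPart (σ u)))
        linarith
      have ht' : M0 - 1/2 < t := by
        have := (abs_lt.mp ht).1
        linarith
      simp only [hM0] at ht' ⊢
      linarith
  have hq0 : ((0 : ↥L), M0) ∈ interior T :=
    mem_interior.mpr ⟨Metric.ball _ r, hball, Metric.isOpen_ball, Metric.mem_ball_self hrpos⟩
  obtain ⟨f, hf⟩ := geometric_hahn_banach_open_point (hTconv.interior) isOpen_interior
    (fun h => hpt (interior_subset h))
  -- extend separation to T
  have hfT : ∀ a ∈ T, f a ≤ f pt := by
    intro a ha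
    apply le_of_forall_pos_le_add
    intro η hη
    set θ := min 1 (η / (|f a - f ((0 : ↥L), M0)| + 1)) with hθ
    have hθpos : 0 < θ := lt_min one_pos (by positivity)
    have hθ1 : θ ≤ 1 := min_le_left _ _
    have hcombo : θ • ((0 : ↥L), M0) + (1 - θ) • a ∈ interior T :=
      hTconv.combo_interior_self_mem_interior hq0 ha hθpos (by linarith) (by ring)
    have hsep := hf _ hcombo
    rw [map_add, _root_.map_smul, _root_.map_smul] at hsep
    -- θ * f q0 + (1-θ) * f a < f pt
    have hexp : θ * f ((0 : ↥L), M0) + (1 - θ) * f a < f pt := by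
      simpa [smul_eq_mul] using hsep
    have hbound : θ * |f a - f ((0 : ↥L), M0)| ≤ η := by
      have h1 : θ ≤ η / (|f a - f ((0 : ↥L), M0)| + 1) := min_le_right _ _
      have h2 : θ * (|f a - f ((0 : ↥L), M0)| + 1) ≤ η := by
        rw [← div_mul_cancel₀ η (show |f a - f ((0 : ↥L), M0)| + 1 ≠ 0 by positivity)]
        exact mul_le_mul_of_nonneg_right h1 (by positivity)
      nlinarith [abs_nonneg (f a - f ((0 : ↥L), M0)), hθpos]
    have h3 : f a = θ * f ((0 : ↥L), M0) + (1 - θ) * f a + θ * (f a - f ((0 : ↥L), M0)) := by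
      ring
    have h4 : θ * (f a - f ((0 : ↥L), M0)) ≤ θ * |f a - f ((0 : ↥L), M0)| :=
      mul_le_mul_of_nonneg_left (le_abs_self _) hθpos.le
    linarith
  -- decompose the functional
  set μ := f ((0 : ↥L), (1 : ℝ)) with hμ
  have hg0 : f ((0 : ↥L), (0 : ℝ)) = 0 := by
    have : ((0 : ↥L), (0 : ℝ)) = (0 : ↥L × ℝ) := rfl
    rw [this, map_zero]
  have hdec : ∀ (u : ↥L) (t : ℝ), f (u, t) = f (u, 0) + t * μ := by
    intro u t
    have h1 : ((u, t) : ↥L × ℝ) = (u, 0) + (0, t) := by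
      rw [Prod.mk_add_mk, add_zero, zero_add]
    have h2 : ((0 : ↥L), t) = t • ((0 : ↥L), (1 : ℝ)) := by
      rw [Prod.smul_mk, smul_zero, smul_eq_mul, mul_one]
    rw [h1, map_add, h2, _root_.map_smul, smul_eq_mul]
  have hfpt : f pt = (d - ε) * μ := by
    rw [show pt = ((0 : ↥L), d - ε) from rfl, hdec, hg0, zero_add]
  -- the key inequality
  have hkey : ∀ X : Mat n, X.PosSemidef → ∀ t, ip A₀ X < t →
      f ((Φ.rangeRestrict X - bL : ↥L), (0:ℝ)) + t * μ ≤ (d - ε) * μ := by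
    intro X hX t ht
    have hmem : (((Φ.rangeRestrict X - bL : ↥L), t) : ↥L × ℝ) ∈ T := by
      refine ⟨X, hX, ?_, ht⟩
      have : ((Φ.rangeRestrict X - bL : ↥L) : Fin m → ℝ) = Φ X - b := by
        simp [hbLdef, LinearMap.rangeRestrict]
      rw [this]
      abel
    have := hfT _ hmem
    rwa [hdec, hfpt] at this
  -- μ < 0
  have hμle : μ ≤ 0 := by
    by_contra hcon
    push_neg at hcon
    set C := f ((Φ.rangeRestrict Xs - bL : ↥L), (0:ℝ)) with hC
    set t0 := max (ip A₀ Xs + 1) (((d - ε) * μ - C + 1) / μ) with ht0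
    have h1 := hkey Xs hXsd.posSemidef t0 (lt_of_lt_of_le (by linarith) (le_max_left _ _))
    have h2 : ((d - ε) * μ - C + 1) / μ * μ ≤ t0 * μ :=
      mul_le_mul_of_nonneg_right (le_max_right _ _) hcon.le
    rw [div_mul_cancel₀ _ (ne_of_gt hcon)] at h2
    linarith
  have hμlt : μ < 0 := by
    rcases lt_or_eq_of_le hμle with h | h
    · exact h
    · exfalso
      have h1 := hf _ hq0
      rw [hfpt, hdec, hg0, h] at h1
      simp at h1
  -- pass to the limit t → ip A₀ X
  have hineq : ∀ X : Mat n, X.PosSemidef →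
      f ((Φ.rangeRestrict X - bL : ↥L), (0:ℝ)) + ip A₀ X * μ ≤ (d - ε) * μ := by
    intro X hX
    apply le_of_forall_pos_le_add
    intro η hη
    have hpos : 0 < η / (-μ) := div_pos hη (neg_pos.mpr hμlt)
    have h1 := hkey X hX (ip A₀ X + η / (-μ)) (by linarith)
    have h2 : (ip A₀ X + η / (-μ)) * μ = ip A₀ X * μ - η := by
      have hne : μ ≠ 0 := ne_of_lt hμlt
      have h3 : η / (-μ) * μ = -η := by
        rw [div_neg, neg_mul, div_mul_cancel₀ _ hne]
      calc (ip A₀ X + η / (-μ)) * μ = ip A₀ X * μ + η / (-μ) * μ := by ring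
        _ = ip A₀ X * μ - η := by rw [h3]; ring
    linarith [h2 ▸ h1]
  -- construct the dual-optimal y
  obtain ⟨Lc, hLc⟩ := Submodule.exists_isCompl L
  set π := L.linearProjOfIsCompl Lc hLc with hπ
  set c' := (-μ)⁻¹ with hc'def
  have hc' : 0 < c' := inv_pos.mpr (neg_pos.mpr hμlt)
  have hc'μ : c' * μ = -1 := by
    have hne : μ ≠ 0 := ne_of_lt hμlt
    rw [hc'def, inv_neg, neg_mul, inv_mul_cancel₀ hne]
  set G : (Fin m → ℝ) →ₗ[ℝ] ℝ :=
    (((f : (↥L × ℝ) →ₗ[ℝ] ℝ).comp (LinearMap.inl ℝ (↥L) ℝ)).comp (π : (Fin m → ℝ) →ₗ[ℝ] ↥L))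
    with hG
  have hGap : ∀ w, G w = f (π w, 0) := fun w => rfl
  have hGL : ∀ u : ↥L, G (u : Fin m → ℝ) = f (u, 0) := by
    intro u
    rw [hGap]
    congr 2
    exact Submodule.linearProjOfIsCompl_apply_left hLc u
  set y : Fin m → ℝ := fun k => c' * G (Pi.single k (1:ℝ) : Fin m → ℝ) with hy
  have hsingle : ∀ u : Fin m → ℝ, (∑ k, u k • (Pi.single k (1:ℝ) : Fin m → ℝ)) = u := by
    intro u
    funext j
    simp only [Finset.sum_apply, Pi.smul_apply, Pi.single_apply, smul_eq_mul, mul_ite,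
      mul_one, mul_zero]
    rw [Finset.sum_ite_eq Finset.univ j u]
    simp
  have hsum : ∀ u : ↥L, ∑ k, (u : Fin m → ℝ) k * y k = c' * f (u, 0) := by
    intro u
    have h1 : ∑ k, (u : Fin m → ℝ) k * y k =
        c' * G (∑ k, (u : Fin m → ℝ) k • (Pi.single k (1:ℝ) : Fin m → ℝ)) := by
      rw [map_sum, Finset.mul_sum]
      refine Finset.sum_congr rfl fun k _ => ?_
      rw [_root_.map_smul, hy, smul_eq_mul]
      ring
    rw [h1, hsingle, hGL]
  -- y is feasible with value ≥ d - ε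
  have hcoe : ∀ X : Mat n, ((Φ.rangeRestrict X - bL : ↥L) : Fin m → ℝ) = Φ X - b := by
    intro X
    simp [hbLdef, LinearMap.rangeRestrict]
  have hfy : ∀ X : Mat n, X.PosSemidef →
      (d - ε) - ∑ k, b k * y k ≤ ip (A₀ - ∑ k, y k • A k) X := by
    intro X hX
    have h1 := hineq X hX
    -- multiply by c'
    have h2 : c' * f ((Φ.rangeRestrict X - bL : ↥L), 0) ≤
        c' * (((d - ε) - ip A₀ X) * μ) := by
      have hh : f ((Φ.rangeRestrict X - bL : ↥L), 0) ≤ ((d - ε) - ip A₀ X) * μ := by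
        rw [sub_mul]
        linarith
      exact mul_le_mul_of_nonneg_left hh hc'.le
    have h3 : c' * (((d - ε) - ip A₀ X) * μ) = ip A₀ X - (d - ε) := by
      rw [show c' * (((d - ε) - ip A₀ X) * μ) = (c' * μ) * ((d - ε) - ip A₀ X) by ring, hc'μ]
      ring
    have h4 : c' * f ((Φ.rangeRestrict X - bL : ↥L), 0) =
        ∑ k, (ip (A k) X - b k) * y k := by
      rw [← hsum]
      refine Finset.sum_congr rfl fun k _ => ?_
      rw [hcoe, Pi.sub_apply]
      rfl
    have h5 : ∑ k, (ip (A k) X - b k) * y k =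
        ip (∑ k, y k • A k) X - ∑ k, b k * y k := by
      rw [ip_comm, ip_sum_smul_right, ← Finset.sum_sub_distrib]
      refine Finset.sum_congr rfl fun k _ => ?_
      rw [ip_comm X (A k)]
      ring
    have h6 : ip (A₀ - ∑ k, y k • A k) X = ip A₀ X - ip (∑ k, y k • A k) X := by
      rw [ip_comm, ip_sub_right, ip_comm X A₀, ip_comm X (∑ k, y k • A k)]
    rw [h6]
    have h7 : ip (∑ k, y k • A k) X - ∑ k, b k * y k ≤ ip A₀ X - (d - ε) := by
      rw [← h5, ← h4]
      linarith
    linarith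
  have hyfeas : (A₀ - ∑ k, y k • A k).PosSemidef := by
    refine Matrix.PosSemidef.of_dotProduct_mulVec_nonneg (isHermitian_slack hA₀ hA y) fun v => ?_
    rw [star_trivial, ← ip_quadform]
    apply nonneg_of_forall_le_smul (K := (d - ε) - ∑ k, b k * y k)
    intro rr hrr
    have h6 := hfy (rr • vecMulVec v v) (psd_smul hrr.le (posSemidef_vecMulVec v))
    rwa [ip_smul_right] at h6
  have hval : (d - ε) ≤ ∑ k, b k * y k := by
    have h7 := hfy 0 Matrix.PosSemidef.zero
    rw [ip_zero_right] at h7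
    linarith
  have h8 := le_csSup pba ⟨y, hyfeas, rfl⟩
  linarith
end SDPAux


open SDPAux

/-- (i) If `X ∈ S^n_+`, `Z` is positive definite and `X • Z ≤ c`, then
`‖X‖ ≤ c / λ_min(Z)`.  (ii) If `X_t, Z_t` are feasible for the perturbed dual and
primal with `Z_t` positive definite and `X, Z` are optimal, then
`X • Z_t + X_t • Z = X_t • Z_t`.  (iii) Consequently, if the primal SDP at `t = 0`
is strictly feasible and the perturbed duals have strictly feasible points
`X_t → X₀`, the optimal solution sets of the perturbed dual and primal SDPs are
uniformly bounded for small `t`. -/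
theorem eigenvalue_bound_and_uniform_boundedness (n m : ℕ) (hn : 0 < n)
    (δ : ℝ) (hδ : 0 < δ)
    (A₀ : ℝ → Mat n) (A : Fin m → ℝ → Mat n) (b : ℝ → Fin m → ℝ)
    (hA₀symm : ∀ t, (A₀ t).IsSymm) (hAsymm : ∀ k t, (A k t).IsSymm)
    (hA₀cont : Tendsto A₀ (nhdsWithin 0 (Icc 0 δ)) (nhds (A₀ 0)))
    (hAcont : ∀ k, Tendsto (A k) (nhdsWithin 0 (Icc 0 δ)) (nhds (A k 0)))
    (hbcont : Tendsto b (nhdsWithin 0 (Icc 0 δ)) (nhds (b 0)))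
    -- the primal SDP at t = 0 is strictly feasible
    (hPstrict : ∃ y : Fin m → ℝ, (A₀ 0 - ∑ k, y k • A k 0).PosDef)
    -- the perturbed duals have strictly feasible points X_t → X₀
    (Xf : ℝ → Mat n)
    (hXf : ∀ t ∈ Icc (0:ℝ) δ, (Xf t).PosDef ∧ ∀ k, ip (A k t) (Xf t) = b t k)
    (hXfcont : Tendsto Xf (nhdsWithin 0 (Icc 0 δ)) (nhds (Xf 0))) :
    -- (i) eigenvalue bound
    (∀ (X Z : Mat n) (c : ℝ) (_hX : X.PosSemidef) (hZ : Z.PosDef),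
      ip X Z ≤ c → frobNorm X ≤ c / ⨅ i, hZ.1.eigenvalues i) ∧
    -- (ii) trace identity at optimality
    (∀ t ∈ Icc (0:ℝ) δ, ∀ (X Z Xt Zt : Mat n) (y yt : Fin m → ℝ),
      X ∈ dualOpt (A₀ t) (fun k => A k t) (b t) →
      ((∑ k, y k • A k t) + Z = A₀ t ∧ Z.PosSemidef ∧
        (∑ k, b t k * y k) = sSup (primalVals (A₀ t) (fun k => A k t) (b t))) →
      Xt ∈ dualFeas (fun k => A k t) (b t) →
      ((∑ k, yt k • A k t) + Zt = A₀ t ∧ Zt.PosDef) →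
      ip X Zt + ip Xt Z = ip Xt Zt) ∧
    -- (iii) uniform boundedness of the optimal solution sets
    (∃ δ' : ℝ, 0 < δ' ∧ δ' ≤ δ ∧ ∃ R : ℝ, ∀ t ∈ Icc (0:ℝ) δ',
      (∀ X ∈ dualOpt (A₀ t) (fun k => A k t) (b t), frobNorm X ≤ R) ∧
      (∀ Z ∈ primalOptSlack (A₀ t) (fun k => A k t) (b t), frobNorm Z ≤ R)) := by
    classical
  obtain ⟨y₀, hy₀⟩ := hPstrict
  have part1 : ∀ (X Z : Mat n) (c : ℝ) (_hX : X.PosSemidef) (hZ : Z.PosDef),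
      ip X Z ≤ c → frobNorm X ≤ c / ⨅ i, hZ.1.eigenvalues i :=
    fun X Z c hX hZ h => part_i hn X Z c hX hZ h
  refine ⟨part1, ?_, ?_⟩
  · -- part (ii)
    intro t ht X Z Xt Zt y yt hXopt hyZ hXt hytZt
    have hXft := hXf t ht
    have hZeq : Z = A₀ t - ∑ k, y k • A k t := (eq_sub_of_add_eq' hyZ.1)
    have hslack : (A₀ t - ∑ k, y k • A k t).PosSemidef := hZeq ▸ hyZ.2.1
    have SD := strong_duality hn (A₀ t) (fun k => A k t) (b t) (hA₀symm t)
      (fun k => hAsymm k t) (Xf t) hXft.1 hXft.2 y hslack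
    obtain ⟨⟨hXpsd, hXfe⟩, hXval⟩ := hXopt
    have hZteq : Zt = A₀ t - ∑ k, yt k • A k t := (eq_sub_of_add_eq' hytZt.1)
    have e1 : ip X Zt = ip (A₀ t) X - ∑ k, yt k * b t k := by
      rw [hZteq, ip_sub_right, ip_sum_smul_right, ip_comm X (A₀ t)]
      congr 1
      exact Finset.sum_congr rfl fun k _ => by rw [ip_comm X (A k t), hXfe k]
    have e2 : ip Xt Z = ip (A₀ t) Xt - ∑ k, y k * b t k := by
      rw [hZeq, ip_sub_right, ip_sum_smul_right, ip_comm Xt (A₀ t)]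
      congr 1
      exact Finset.sum_congr rfl fun k _ => by rw [ip_comm Xt (A k t), hXt.2 k]
    have e3 : ip Xt Zt = ip (A₀ t) Xt - ∑ k, yt k * b t k := by
      rw [hZteq, ip_sub_right, ip_sum_smul_right, ip_comm Xt (A₀ t)]
      congr 1
      exact Finset.sum_congr rfl fun k _ => by rw [ip_comm Xt (A k t), hXt.2 k]
    have v1 : ∑ k, y k * b t k = ip (A₀ t) X := by
      rw [hXval, ← SD, ← hyZ.2.2]
      exact Finset.sum_congr rfl fun k _ => mul_comm _ _
    rw [e1, e2, e3, v1]
    ring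
  · -- part (iii)
    have h0mem : (0:ℝ) ∈ Icc 0 δ := ⟨le_refl 0, hδ.le⟩
    have hXf0 := hXf 0 h0mem
    have hZ₀pd : (A₀ 0 - ∑ k, y₀ k • A k 0).PosDef := hy₀
    set αz := lam hZ₀pd.1 with hαzdef
    have hαz : 0 < αz := by
      obtain ⟨i0, h⟩ := exists_lam_eq hn hZ₀pd.1
      rw [hαzdef, h]; exact hZ₀pd.eigenvalues_pos i0
    set αx := lam hXf0.1.1 with hαxdef
    have hαx : 0 < αx := by
      obtain ⟨i0, h⟩ := exists_lam_eq hn hXf0.1.1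
      rw [hαxdef, h]; exact hXf0.1.eigenvalues_pos i0
    have quadZ : ∀ v : Fin n → ℝ, αz * (v ⬝ᵥ v) ≤ v ⬝ᵥ ((A₀ 0 - ∑ k, y₀ k • A k 0) *ᵥ v) :=
      quad_ge_lam hZ₀pd.1
    have quadX : ∀ v : Fin n → ℝ, αx * (v ⬝ᵥ v) ≤ v ⬝ᵥ (Xf 0 *ᵥ v) := quad_ge_lam hXf0.1.1
    set l := nhdsWithin (0:ℝ) (Icc 0 δ) with hl
    set K₀ := ip (A₀ 0) (Xf 0) - ∑ k, b 0 k * y₀ k with hK₀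
    -- eventually facts
    have hMt : Tendsto (fun t => A₀ t - ∑ k, y₀ k • A k t) l
        (nhds (A₀ 0 - ∑ k, y₀ k • A k 0)) :=
      hA₀cont.sub (tendsto_finset_sum _ (fun k _ => (hAcont k).const_smul (y₀ k)))
    have hnZ : Tendsto (fun t => nrm1 ((A₀ t - ∑ k, y₀ k • A k t) -
        (A₀ 0 - ∑ k, y₀ k • A k 0))) l (nhds 0) := by
      have h1 := hMt.sub (tendsto_const_nhds (x := A₀ 0 - ∑ k, y₀ k • A k 0))
      rw [sub_self] at h1
      have h2 := (continuous_nrm1.tendsto (0 : Mat n)).comp h1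
      have h3 : nrm1 (0 : Mat n) = 0 := by simp [nrm1]
      rw [h3] at h2
      exact h2
    have evZ : ∀ᶠ t in l, nrm1 ((A₀ t - ∑ k, y₀ k • A k t) - (A₀ 0 - ∑ k, y₀ k • A k 0))
        < αz/2 := hnZ.eventually (gt_mem_nhds (by positivity))
    have hnX : Tendsto (fun t => nrm1 (Xf t - Xf 0)) l (nhds 0) := by
      have h1 := hXfcont.sub (tendsto_const_nhds (x := Xf 0))
      rw [sub_self] at h1
      have h2 := (continuous_nrm1.tendsto (0 : Mat n)).comp h1
      have h3 : nrm1 (0 : Mat n) = 0 := by simp [nrm1]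
      rw [h3] at h2
      exact h2
    have evX : ∀ᶠ t in l, nrm1 (Xf t - Xf 0) < αx/2 :=
      hnX.eventually (gt_mem_nhds (by positivity))
    have hKt : Tendsto (fun t => ip (A₀ t) (Xf t) - ∑ k, b t k * y₀ k) l (nhds K₀) :=
      (tendsto_ip hA₀cont hXfcont).sub (tendsto_finset_sum _ fun k _ =>
        (((continuous_apply k).tendsto (b 0)).comp hbcont).mul_const (y₀ k))
    have evK : ∀ᶠ t in l, ip (A₀ t) (Xf t) - ∑ k, b t k * y₀ k < K₀ + 1 :=
      hKt.eventually (gt_mem_nhds (by linarith))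
    have evI : ∀ᶠ t in l, t ∈ Icc (0:ℝ) δ := eventually_mem_nhdsWithin
    have evAll := ((evZ.and evX).and (evK.and evI))
    rw [Filter.eventually_iff_exists_mem] at evAll
    obtain ⟨S, hSl, hS⟩ := evAll
    rw [hl, mem_nhdsWithin] at hSl
    obtain ⟨U, hUopen, hU0, hUsub⟩ := hSl
    obtain ⟨εU, hεU, hballU⟩ := Metric.isOpen_iff.mp hUopen 0 hU0
    refine ⟨min δ (εU/2), lt_min hδ (by linarith), min_le_left _ _,
      max (max (K₀+1) 0 / (αz/2)) (max (K₀+1) 0 / (αx/2)), ?_⟩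
    intro t ht'
    have htIcc : t ∈ Icc (0:ℝ) δ := ⟨ht'.1, le_trans ht'.2 (min_le_left _ _)⟩
    have htS : t ∈ S := by
      apply hUsub
      refine ⟨hballU ?_, htIcc⟩
      rw [Metric.mem_ball, Real.dist_eq, sub_zero, abs_of_nonneg ht'.1]
      exact lt_of_le_of_lt (le_trans ht'.2 (min_le_right _ _)) (by linarith)
    obtain ⟨⟨hZcl, hXcl⟩, hKcl, _⟩ := hS t htS
    -- properties of the slack matrix at t
    have hMherm : (A₀ t - ∑ k, y₀ k • A k t).IsHermitian :=
      isHermitian_slack (hA₀symm t) (fun k => hAsymm k t) y₀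
    have hq2 : ∀ v : Fin n → ℝ, (αz/2) * (v ⬝ᵥ v) ≤ v ⬝ᵥ ((A₀ t - ∑ k, y₀ k • A k t) *ᵥ v) := by
      intro v
      have h1 := quad_lower_perturb quadZ (M := A₀ t - ∑ k, y₀ k • A k t) v
      have h2 : (αz/2) * (v ⬝ᵥ v) ≤
          (αz - nrm1 ((A₀ t - ∑ k, y₀ k • A k t) - (A₀ 0 - ∑ k, y₀ k • A k 0))) * (v ⬝ᵥ v) :=
        mul_le_mul_of_nonneg_right (by linarith) (dotProduct_self_nonneg' v)
      linarith
    have hMpd : (A₀ t - ∑ k, y₀ k • A k t).PosDef := posdef_of_quad hMherm (by linarith) hq2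
    have hlamM : αz/2 ≤ lam hMpd.1 := lam_ge_of_quad hn hMpd.1 hq2
    have hXtf := hXf t htIcc
    have hqX2 : ∀ v : Fin n → ℝ, (αx/2) * (v ⬝ᵥ v) ≤ v ⬝ᵥ (Xf t *ᵥ v) := by
      intro v
      have h1 := quad_lower_perturb quadX (M := Xf t) v
      have h2 : (αx/2) * (v ⬝ᵥ v) ≤ (αx - nrm1 (Xf t - Xf 0)) * (v ⬝ᵥ v) :=
        mul_le_mul_of_nonneg_right (by linarith) (dotProduct_self_nonneg' v)
      linarith
    have hlamX : αx/2 ≤ lam hXtf.1.1 := lam_ge_of_quad hn hXtf.1.1 hqX2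
    have hXtfeas : Xf t ∈ dualFeas (fun k => A k t) (b t) := ⟨hXtf.1.posSemidef, hXtf.2⟩
    have hMpsd : (A₀ t - ∑ k, y₀ k • A k t).PosSemidef := hMpd.posSemidef
    constructor
    · -- dual optimal solutions
      intro X hX
      obtain ⟨⟨hXpsd, hXfe⟩, hXval⟩ := hX
      have hbb : BddBelow (dualVals (A₀ t) (fun k => A k t) (b t)) := bddBelow_dualVals hMpsd
      have h1 : ip (A₀ t) X ≤ ip (A₀ t) (Xf t) := by
        rw [hXval]
        exact csInf_le hbb ⟨Xf t, hXtfeas, rfl⟩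
      have e1 : ip X (A₀ t - ∑ k, y₀ k • A k t) = ip (A₀ t) X - ∑ k, b t k * y₀ k := by
        rw [ip_sub_right, ip_sum_smul_right, ip_comm X (A₀ t)]
        congr 1
        exact Finset.sum_congr rfl fun k _ => by rw [ip_comm X (A k t), hXfe k, mul_comm]
      have h2 : ip X (A₀ t - ∑ k, y₀ k • A k t) ≤ max (K₀+1) 0 := by
        rw [e1]
        have : ip (A₀ t) X - ∑ k, b t k * y₀ k ≤ K₀ + 1 := by linarith
        exact le_trans this (le_max_left _ _)
      have h3 := part1 X (A₀ t - ∑ k, y₀ k • A k t) (max (K₀+1) 0) hXpsd hMpd h2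
      have h4 : max (K₀+1) 0 / (⨅ i, hMpd.1.eigenvalues i) ≤ max (K₀+1) 0 / (αz/2) :=
        div_le_div_of_nonneg_left (le_max_right _ _) (by linarith) hlamM
      exact le_trans h3 (le_trans h4 (le_max_left _ _))
    · -- primal optimal slacks
      intro Z hZmem
      obtain ⟨y, hyZ, hZpsd, hval⟩ := hZmem
      have hZeq : Z = A₀ t - ∑ k, y k • A k t := eq_sub_of_add_eq' hyZ
      have hba : BddAbove (primalVals (A₀ t) (fun k => A k t) (b t)) :=
        bddAbove_primalVals hXtfeas
      have h5 : ∑ k, b t k * y₀ k ≤ ∑ k, b t k * y k := by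
        rw [hval]
        exact le_csSup hba ⟨y₀, hMpsd, rfl⟩
      have e2 : ip Z (Xf t) = ip (A₀ t) (Xf t) - ∑ k, b t k * y k := by
        rw [ip_comm, hZeq, ip_sub_right, ip_sum_smul_right, ip_comm (Xf t) (A₀ t)]
        congr 1
        exact Finset.sum_congr rfl fun k _ =>
          by rw [ip_comm (Xf t) (A k t), hXtf.2 k, mul_comm]
      have h6 : ip Z (Xf t) ≤ max (K₀+1) 0 := by
        rw [e2]
        have : ip (A₀ t) (Xf t) - ∑ k, b t k * y k ≤ K₀ + 1 := by linarith
        exact le_trans this (le_max_left _ _)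
      have h7 := part1 Z (Xf t) (max (K₀+1) 0) hZpsd hXtf.1 h6
      have h8 : max (K₀+1) 0 / (⨅ i, hXtf.1.1.eigenvalues i) ≤ max (K₀+1) 0 / (αx/2) :=
        div_le_div_of_nonneg_left (le_max_right _ _) (by linarith) hlamX
      exact le_trans h7 (le_trans h8 (le_max_right _ _))
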